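/- Let G be a reductive group acting on finite-dimensional representations X and Y, with Y symplectic and the G-action on Y Hamiltonian with moment map μ_Y; let μ : T*X × Y → 𝔤^∨ be the total moment map (sum of the canonical moment map on T*X and μ_Y). For x ∈ X let μ_x : Y → (𝔤^x)^∨ be the composite of μ_Y with restriction to the stabilizer subalgebra 𝔤^x. Then for any x ∈ X, the intersection μ^{-1}(0) ∩ ({x} × X^∨ × Y) is isomorphic (as a set/variety) to the product Ker(X^∨ → (𝔤^x)^⊥) × μ_x^{-1}(0), where X^∨ → 𝔤^∨ is the dual of the action map g ↦ g.x; consequently dim(μ^{-1}(0) ∩ ({x} × X^∨ × Y)) = dim X − dim 𝔤.x + dim μ_x^{-1}(0), and dim(μ^{-1}(0) ∩ (G.x × X^∨ × Y)) = dim X + dim μ_x^{-1}(0). -/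

import Mathlib

open Module

/-- for the total moment map `μ(x,ξ,y)(g) = ξ(g.x) + μ_Y(y)(g)` on
`T*X × Y`, the slice `μ⁻¹(0) ∩ ({x} × X^∨ × Y)` is in bijection with
`Ker(X^∨ → (𝔤^x)^⊥) × μ_x⁻¹(0)`; the kernel has dimension `dim X − dim 𝔤.x`
(so the slice has dimension `dim X − dim 𝔤.x + dim μ_x⁻¹(0)`); and, by equivariance,
`μ⁻¹(0) ∩ (G.x × X^∨ × Y)` is in bijection with `G.x × Ker × μ_x⁻¹(0)`
(so it has dimension `dim X + dim μ_x⁻¹(0)`). -/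
theorem stmt18
    (𝔤 X Y : Type*)
    [AddCommGroup 𝔤] [Module ℂ 𝔤] [FiniteDimensional ℂ 𝔤]
    [AddCommGroup X] [Module ℂ X] [FiniteDimensional ℂ X]
    [AddCommGroup Y] [Module ℂ Y] [FiniteDimensional ℂ Y]
    (ρ : 𝔤 →ₗ[ℂ] X →ₗ[ℂ] X)
    (μY : Y → Dual ℂ 𝔤)
    (G : Type*) [Group G]
    [DistribMulAction G X] [SMulCommClass G ℂ X]
    [DistribMulAction G 𝔤] [SMulCommClass G ℂ 𝔤]
    [MulAction G Y]
    (hρ : ∀ (g : G) (η : 𝔤) (v : X), ρ (g • η) (g • v) = g • ρ η v)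
    (hμY : ∀ (g : G) (y : Y) (η : 𝔤), μY (g • y) (g • η) = μY y η)
    (x : X) :
    -- the slice over x is a product:
    Nonempty ({p : Dual ℂ X × Y // ∀ g : 𝔤, p.1 (ρ g x) + μY p.2 g = 0} ≃
      (LinearMap.ker ((ρ.flip x).dualMap) × {y : Y // ∀ g : 𝔤, ρ g x = 0 → μY y g = 0})) ∧
    -- the kernel factor has dimension dim X − dim 𝔤.x:
    finrank ℂ (LinearMap.ker ((ρ.flip x).dualMap))
      = finrank ℂ X - finrank ℂ (LinearMap.range (ρ.flip x)) ∧
    -- the slice over the orbit G.x is a product with the orbit: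
    Nonempty ({p : X × Dual ℂ X × Y //
        p.1 ∈ MulAction.orbit G x ∧ ∀ g : 𝔤, p.2.1 (ρ g p.1) + μY p.2.2 g = 0} ≃
      (MulAction.orbit G x ×
        LinearMap.ker ((ρ.flip x).dualMap) ×
        {y : Y // ∀ g : 𝔤, ρ g x = 0 → μY y g = 0})) := by
  classical
  set f : 𝔤 →ₗ[ℂ] X := ρ.flip x with hf
  -- a section: for each admissible y choose ξ with ξ (ρ g x) = -(μY y g)
  have hsec : ∀ y : Y, (∀ g : 𝔤, ρ g x = 0 → μY y g = 0) →
      ∃ ξ : Dual ℂ X, ∀ g : 𝔤, ξ (ρ g x) = -(μY y g) := by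
    intro y hy
    have hmem : -(μY y) ∈ (LinearMap.ker f).dualAnnihilator := by
      rw [Submodule.mem_dualAnnihilator]
      intro g hg
      rw [LinearMap.mem_ker] at hg
      have : μY y g = 0 := hy g hg
      simp [this]
    rw [← LinearMap.range_dualMap_eq_dualAnnihilator_ker] at hmem
    obtain ⟨ξ, hξ⟩ := hmem
    refine ⟨ξ, fun g => ?_⟩
    have := congrFun (congrArg DFunLike.coe hξ) g
    simpa [hf] using this
  set s : {y : Y // ∀ g : 𝔤, ρ g x = 0 → μY y g = 0} → Dual ℂ X :=
    fun yy => (hsec yy.1 yy.2).choose with hsdef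
  have hs : ∀ yy g, s yy (ρ g x) = -(μY yy.1 g) := fun yy => (hsec yy.1 yy.2).choose_spec
  -- the slice equivalence
  have e1 : {p : Dual ℂ X × Y // ∀ g : 𝔤, p.1 (ρ g x) + μY p.2 g = 0} ≃
      (LinearMap.ker ((ρ.flip x).dualMap) × {y : Y // ∀ g : 𝔤, ρ g x = 0 → μY y g = 0}) := by
    refine
      { toFun := fun p =>
          have hy : ∀ g : 𝔤, ρ g x = 0 → μY p.1.2 g = 0 := fun g hg => by
            have := p.2 g; rw [hg] at this; simpa using this
          (⟨p.1.1 - s ⟨p.1.2, hy⟩, ?_⟩, ⟨p.1.2, hy⟩)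
        invFun := fun q => ⟨(q.1.1 + s q.2, q.2.1), fun g => ?_⟩
        left_inv := fun p => ?_
        right_inv := fun q => ?_ }
    · -- kernel membership
      rw [LinearMap.mem_ker]
      apply LinearMap.ext
      intro g
      have h1 := p.2 g
      have h2 := hs ⟨p.1.2, hy⟩ g
      simp only [LinearMap.dualMap_apply, LinearMap.sub_apply, LinearMap.zero_apply]
      show p.1.1 (ρ g x) - s ⟨p.1.2, hy⟩ (ρ g x) = 0
      rw [h2]
      linear_combination h1
    · -- constraint for invFun
      have hk : (q.1 : Dual ℂ X) (ρ g x) = 0 := by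
        have h := LinearMap.congr_fun (LinearMap.mem_ker.mp q.1.2) g
        simp only [LinearMap.dualMap_apply, LinearMap.flip_apply, LinearMap.zero_apply] at h
        exact h
      have h2 := hs q.2 g
      simp only [LinearMap.add_apply]
      rw [hk, h2]
      ring
    · apply Subtype.ext
      apply Prod.ext
      · simp
      · rfl
    · apply Prod.ext
      · apply Subtype.ext; simp
      · apply Subtype.ext; rfl
  refine ⟨⟨e1⟩, ?_, ?_⟩
  · -- dimension count
    rw [LinearMap.ker_dualMap_eq_dualAnnihilator_range]
    have h1 := (Subspace.quotEquivAnnihilator (LinearMap.range f)).finrank_eq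
    have h2 := Submodule.finrank_quotient_add_finrank (LinearMap.range f)
    omega
  · -- the orbit version
    -- twisting linear map
    set τ : G → (X →ₗ[ℂ] X) := fun g => DistribMulAction.toLinearMap ℂ X g with hτ
    set gof : {x' : X // x' ∈ MulAction.orbit G x} → G :=
      fun o => (MulAction.mem_orbit_iff.mp o.2).choose with hgof
    have hgspec : ∀ o, gof o • x = o.1 := fun o => (MulAction.mem_orbit_iff.mp o.2).choose_spec
    have e2 : {p : X × Dual ℂ X × Y //
        p.1 ∈ MulAction.orbit G x ∧ ∀ g : 𝔤, p.2.1 (ρ g p.1) + μY p.2.2 g = 0} ≃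
        ({x' : X // x' ∈ MulAction.orbit G x} ×
          {p : Dual ℂ X × Y // ∀ g : 𝔤, p.1 (ρ g x) + μY p.2 g = 0}) := by
      refine
        { toFun := fun p =>
            (⟨p.1.1, p.2.1⟩, ⟨(p.1.2.1.comp (τ (gof ⟨p.1.1, p.2.1⟩)),
              (gof ⟨p.1.1, p.2.1⟩)⁻¹ • p.1.2.2), fun η => ?_⟩)
          invFun := fun q =>
            ⟨(q.1.1, q.2.1.1.comp (τ (gof q.1)⁻¹), gof q.1 • q.2.1.2), q.1.2, fun η => ?_⟩
          left_inv := fun p => ?_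
          right_inv := fun q => ?_ }
      · -- forward constraint
        set g := gof ⟨p.1.1, p.2.1⟩ with hg
        have hx' : g • x = p.1.1 := hgspec _
        have key : g • ρ η x = ρ (g • η) p.1.1 := by
          rw [← hρ g η x, hx']
        show p.1.2.1 (g • ρ η x) + μY (g⁻¹ • p.1.2.2) η = 0
        rw [key]
        have hmu : μY (g⁻¹ • p.1.2.2) η = μY p.1.2.2 (g • η) := by
          have := hμY g (g⁻¹ • p.1.2.2) η
          rw [smul_inv_smul] at this
          exact this.symm
        rw [hmu]
        exact p.2.2 (g • η)
      · -- backward constraint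
        set g := gof q.1 with hg
        have hx' : g • x = q.1.1 := hgspec _
        have key : (g)⁻¹ • ρ η q.1.1 = ρ (g⁻¹ • η) x := by
          rw [← hx', ← hρ g⁻¹ η (g • x), inv_smul_smul]
        show q.2.1.1 (g⁻¹ • ρ η q.1.1) + μY (g • q.2.1.2) η = 0
        rw [key]
        have hmu : μY (g • q.2.1.2) η = μY q.2.1.2 (g⁻¹ • η) := by
          have := hμY g q.2.1.2 (g⁻¹ • η)
          rwa [smul_inv_smul] at this
        rw [hmu]
        exact q.2.2 (g⁻¹ • η)
      · -- left inverse
        apply Subtype.ext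
        refine Prod.ext rfl (Prod.ext ?_ ?_)
        · apply LinearMap.ext; intro v
          show p.1.2.1 (gof ⟨p.1.1, p.2.1⟩ • (gof ⟨p.1.1, p.2.1⟩)⁻¹ • v) = p.1.2.1 v
          rw [smul_inv_smul]
        · show gof ⟨p.1.1, p.2.1⟩ • (gof ⟨p.1.1, p.2.1⟩)⁻¹ • p.1.2.2 = p.1.2.2
          rw [smul_inv_smul]
      · -- right inverse
        refine Prod.ext (Subtype.ext rfl) (Subtype.ext (Prod.ext ?_ ?_))
        · apply LinearMap.ext; intro v
          show q.2.1.1 ((gof q.1)⁻¹ • gof q.1 • v) = q.2.1.1 v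
          rw [inv_smul_smul]
        · show (gof q.1)⁻¹ • gof q.1 • q.2.1.2 = q.2.1.2
          rw [inv_smul_smul]
    refine ⟨e2.trans ?_⟩
    exact Equiv.prodCongr (Equiv.refl _) e1
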